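/- (Noise Alignment for Linear Schemes) Let p be a prime and let F_v, F_u ∈ F_p^{N×L} and H_v, H_u ∈ F_p^{N×L_Z}. Suppose v and u each satisfy the linear security condition individually (for every s ∈ F_p^L there exists z ∈ F_p^{L_Z} with F_v s = H_v z, and likewise for u), and suppose the pair (v,u) satisfies the linear correctness condition (for all s ∈ F_p^L and z ∈ F_p^{L_Z}, if F_v s = H_v z and F_u s = H_u z then s = 0). Then the intersection of the row space of H_v and the row space of H_u has dimension at least L. -/

import Mathlib

open Module LinearMap Submodule Matrix

/-- The row space of a matrix: the span of its rows. -/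
def rowSpan {p N LZ : ℕ} (H : Matrix (Fin N) (Fin LZ) (ZMod p)) :
    Submodule (ZMod p) (Fin LZ → ZMod p) :=
  Submodule.span (ZMod p) (Set.range fun i => H i)

lemma rank_aux {K : Type*} [Field K] {m n : Type*} [Fintype m] [Fintype n]
    (A : Matrix m n K) :
    finrank K ↥(span K (Set.range A)) + finrank K ↥(ker A.mulVecLin) = Fintype.card n := by
  have h1 : span K (Set.range A) = range Aᵀ.mulVecLin := by
    rw [Matrix.range_mulVecLin]; rfl
  have h2 := LinearMap.finrank_range_add_finrank_ker A.mulVecLin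
  have h3 : finrank K ↥(LinearMap.range Aᵀ.mulVecLin)
      = finrank K ↥(LinearMap.range A.mulVecLin) := Matrix.rank_transpose A
  rw [h1, h3]
  simpa [Module.finrank_fintype_fun_eq_card] using h2

/-- Noise Alignment for Linear Schemes: Let `p` be a prime, and consider
linear signals `v = F_v S + H_v Z` and `u = F_u S + H_u Z`.  If `v` and `u` each satisfy
the linear security condition individually (for every secret `s` there is a noise `z`
with `F_v s = H_v z`, and likewise for `u`), and the pair `(v, u)` satisfies the linear
correctness condition (`F_v s = H_v z` and `F_u s = H_u z` imply `s = 0`), then the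
intersection of the row spaces of `H_v` and `H_u` has dimension at least `L`. -/
theorem linear_noise_alignment (p L LZ N : ℕ) [Fact p.Prime]
    (Fv Fu : Matrix (Fin N) (Fin L) (ZMod p))
    (Hv Hu : Matrix (Fin N) (Fin LZ) (ZMod p))
    (hsecv : ∀ s : Fin L → ZMod p, ∃ z : Fin LZ → ZMod p, Fv.mulVec s = Hv.mulVec z)
    (hsecu : ∀ s : Fin L → ZMod p, ∃ z : Fin LZ → ZMod p, Fu.mulVec s = Hu.mulVec z)
    (hcorr : ∀ (s : Fin L → ZMod p) (z : Fin LZ → ZMod p),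
      Fv.mulVec s = Hv.mulVec z → Fu.mulVec s = Hu.mulVec z → s = 0) :
    L ≤ Module.finrank (ZMod p) ↥(rowSpan Hv ⊓ rowSpan Hu) := by
  classical
  set Kv := LinearMap.ker Hv.mulVecLin with hKvdef
  set Ku := LinearMap.ker Hu.mulVecLin with hKudef
  -- Step 1: L + finrank (Kv ⊔ Ku) ≤ LZ
  let Φ : ((Fin L → ZMod p) × (Fin LZ → ZMod p) × (Fin LZ → ZMod p)) →ₗ[ZMod p]
      ((Fin N → ZMod p) × (Fin N → ZMod p)) :=
    { toFun := fun x => (Fv.mulVec x.1 - Hv.mulVec x.2.1, Fu.mulVec x.1 - Hu.mulVec x.2.2)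
      map_add' := by
        intro x y
        simp [Matrix.mulVec_add, Prod.ext_iff]
        constructor <;> abel
      map_smul' := by
        intro c x
        simp [Matrix.mulVec_smul, Prod.ext_iff, smul_sub] }
  set T := LinearMap.ker Φ with hTdef
  let ψ : T →ₗ[ZMod p] (Fin L → ZMod p) := (LinearMap.fst (ZMod p) _ _).comp T.subtype
  let δ : ((Fin L → ZMod p) × (Fin LZ → ZMod p) × (Fin LZ → ZMod p)) →ₗ[ZMod p]
      (Fin LZ → ZMod p) :=
    (LinearMap.fst (ZMod p) _ _).comp (LinearMap.snd (ZMod p) _ _)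
      - (LinearMap.snd (ZMod p) _ _).comp (LinearMap.snd (ZMod p) _ _)
  let φ : T →ₗ[ZMod p] ((Fin LZ → ZMod p) ⧸ (Kv ⊔ Ku)) :=
    ((Kv ⊔ Ku).mkQ.comp δ).comp T.subtype
  have hψsurj : Function.Surjective ψ := by
    intro s
    obtain ⟨z, hz⟩ := hsecv s
    obtain ⟨z', hz'⟩ := hsecu s
    refine ⟨⟨(s, z, z'), ?_⟩, rfl⟩
    simp only [hTdef, LinearMap.mem_ker]
    show (Fv.mulVec s - Hv.mulVec z, Fu.mulVec s - Hu.mulVec z') = 0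
    rw [hz, hz']
    simp
  have hker : LinearMap.ker φ ≤ LinearMap.ker ψ := by
    rintro ⟨⟨s, z, z'⟩, hx⟩ h
    simp only [LinearMap.mem_ker, hTdef] at hx
    have hx1 : Fv.mulVec s = Hv.mulVec z := by
      have := congrArg Prod.fst hx
      simpa [sub_eq_zero, Φ] using this
    have hx2 : Fu.mulVec s = Hu.mulVec z' := by
      have := congrArg Prod.snd hx
      simpa [sub_eq_zero, Φ] using this
    have hmem : z - z' ∈ Kv ⊔ Ku := by
      have h' : ((Kv ⊔ Ku).mkQ) (z - z') = 0 := h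
      rwa [← Submodule.Quotient.mk_eq_zero (Kv ⊔ Ku)]
    obtain ⟨a, ha, b, hb, hab⟩ := Submodule.mem_sup.mp hmem
    have haz : Hv.mulVec a = 0 := ha
    have hbz : Hu.mulVec b = 0 := hb
    have hs : s = 0 := by
      apply hcorr s (z - a)
      · rw [Matrix.mulVec_sub, haz, hx1]; simp
      · have hz'' : z - a = z' + b := by
          have h' : z = a + b + z' := by rw [hab]; abel
          rw [h']; abel
        rw [hz'', Matrix.mulVec_add, hbz, hx2]; simp
    simp only [LinearMap.mem_ker]
    show s = 0
    exact hs
  have e1 := LinearMap.finrank_range_add_finrank_ker ψ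
  have e2 := LinearMap.finrank_range_add_finrank_ker φ
  have e3 : finrank (ZMod p) ↥(LinearMap.ker φ) ≤ finrank (ZMod p) ↥(LinearMap.ker ψ) :=
    Submodule.finrank_mono hker
  have e4 : finrank (ZMod p) ↥(LinearMap.range φ)
      ≤ finrank (ZMod p) ((Fin LZ → ZMod p) ⧸ (Kv ⊔ Ku)) :=
    (LinearMap.range φ).finrank_le
  have e5 := Submodule.finrank_quotient_add_finrank (Kv ⊔ Ku)
  have hψr : finrank (ZMod p) ↥(LinearMap.range ψ) = L := by
    rw [LinearMap.range_eq_top.mpr hψsurj]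
    simp [Module.finrank_fintype_fun_eq_card]
  rw [Module.finrank_fintype_fun_eq_card] at e5
  simp only [Fintype.card_fin] at e5
  have step1 : L + finrank (ZMod p) ↥(Kv ⊔ Ku) ≤ LZ := by omega
  -- Step 2: duality between row spaces and kernels
  have r1 := rank_aux Hv
  have r2 := rank_aux Hu
  rw [← hKvdef] at r1
  rw [← hKudef] at r2
  have hspv : span (ZMod p) (Set.range Hv) = rowSpan Hv := rfl
  have hspu : span (ZMod p) (Set.range Hu) = rowSpan Hu := rfl
  rw [hspv] at r1
  rw [hspu] at r2
  set A := Matrix.fromRows Hv Hu with hAdef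
  have rA := rank_aux A
  have hAker : LinearMap.ker A.mulVecLin = Kv ⊓ Ku := by
    ext z
    simp only [LinearMap.mem_ker, Submodule.mem_inf, Matrix.mulVecLin_apply, hKvdef, hKudef]
    constructor
    · intro h
      constructor
      · funext i; have := congrFun h (Sum.inl i)
        simpa [hAdef, Matrix.fromRows_mulVec] using this
      · funext i; have := congrFun h (Sum.inr i)
        simpa [hAdef, Matrix.fromRows_mulVec] using this
    · rintro ⟨h1, h2⟩
      funext i
      cases i with
      | inl i => simpa [hAdef, Matrix.fromRows_mulVec] using congrFun h1 i
      | inr i => simpa [hAdef, Matrix.fromRows_mulVec] using congrFun h2 i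
  have hAspan : span (ZMod p) (Set.range A) = rowSpan Hv ⊔ rowSpan Hu := by
    have hr : Set.range A = Set.range Hv ∪ Set.range Hu := by
      rw [hAdef]
      show Set.range (Sum.elim Hv Hu) = _
      exact Set.Sum.elim_range _ _
    rw [hr, Submodule.span_union]
    rfl
  rw [hAker, hAspan] at rA
  simp only [Fintype.card_fin] at r1 r2 rA
  have sw := Submodule.finrank_sup_add_finrank_inf_eq (rowSpan Hv) (rowSpan Hu)
  have sk := Submodule.finrank_sup_add_finrank_inf_eq Kv Ku
  omega
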